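/- Let X ∈ U(n, 3^s) be a balanced three-level lattice design with n ≥ 2, and map each entry to z_{ij} = (2 x_{ij} + 1)/6 ∈ {1/6, 1/2, 5/6}. Then WL2²(X) − a_2 = (2/n²)(23/18)^s ∑_{1 ≤ i < k ≤ n} (27/23)^{β(x_i, x_k)} ≥ ((n−1)(23+4f)/(23n)) (23/18)^s (27/23)^θ, where a_2 = (1/n)(3/2)^s − (4/3)^s, β̄ = s(n−3)/(3(n−1)), θ = ⌊β̄⌋ and f = β̄ − θ. -/

import Mathlib

open Finset

/-- The coincidence number β(x, w) = #{j : x_j = w_j} of two lattice points. -/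
def coincidence {s q : ℕ} (x w : Fin s → Fin q) : ℕ :=
  (univ.filter fun j => x j = w j).card

/-- A design `X ∈ U(n, q^s)` is balanced: `q ∣ n` and every level occurs exactly
`n / q` times in each column; here `q = 3`. -/
def IsBalanced {n s q : ℕ} (X : Fin n → Fin s → Fin q) : Prop :=
  q ∣ n ∧ ∀ (j : Fin s) (ℓ : Fin q),
    (univ.filter fun i => X i j = ℓ).card = n / q

/-- The index set of pairs 1 ≤ i < k ≤ n. -/
def pairs (n : ℕ) : Finset (Fin n × Fin n) := univ.filter fun p => p.1 < p.2

/-- The design points mapped to [0,1]: z_{ij} = (2 x_{ij} + 1)/6 ∈ {1/6, 1/2, 5/6}. -/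
noncomputable def zpt3 {n s : ℕ} (X : Fin n → Fin s → Fin 3) (i : Fin n) (j : Fin s) : ℝ :=
  (2 * ((X i j : ℕ) : ℝ) + 1) / 6

/-- The squared wrap-around L₂-discrepancy of the induced point set. -/
noncomputable def WL2sq {n s : ℕ} (X : Fin n → Fin s → Fin 3) : ℝ :=
  -(4 / 3 : ℝ) ^ s
    + 1 / (n : ℝ) ^ 2 * ∑ i, ∑ k, ∏ j,
        (3 / 2 - |zpt3 X i j - zpt3 X k j| * (1 - |zpt3 X i j - zpt3 X k j|))

/- ### Auxiliary lemmas -/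

lemma coincidence_le' {s q : ℕ} (x w : Fin s → Fin q) : coincidence x w ≤ s := by
  simpa [coincidence] using (card_filter_le univ fun j => x j = w j)

lemma coincidence_self' {s q : ℕ} (x : Fin s → Fin q) : coincidence x x = s := by
  simp [coincidence]

lemma coincidence_comm' {s q : ℕ} (x w : Fin s → Fin q) :
    coincidence x w = coincidence w x := by
  unfold coincidence; congr 1; ext j; simp [eq_comm]

lemma term_eq' (a b : Fin 3) :
    (3/2 : ℝ) - |(2*((a:ℕ):ℝ)+1)/6 - (2*((b:ℕ):ℝ)+1)/6| *
      (1 - |(2*((a:ℕ):ℝ)+1)/6 - (2*((b:ℕ):ℝ)+1)/6|)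
    = if a = b then (3/2 : ℝ) else 23/18 := by
  fin_cases a <;> fin_cases b <;>
    norm_num [abs_of_nonneg, abs_of_nonpos, Fin.ext_iff]

lemma pow_coincidence' {s : ℕ} (x w : Fin s → Fin 3) :
    ∏ j, (if x j = w j then (3/2:ℝ) else 23/18)
    = (23/18 : ℝ)^s * (27/23 : ℝ)^(coincidence x w) := by
  rw [Finset.prod_ite, Finset.prod_const, Finset.prod_const]
  have hle := coincidence_le' x w
  have hcard : (univ.filter fun j => ¬ x j = w j).card = s - coincidence x w := by
    have h := Finset.card_filter_add_card_filter_not (s := (univ : Finset (Fin s)))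
      (p := fun j => x j = w j)
    simp only [Finset.card_univ, Fintype.card_fin] at h
    unfold coincidence at *
    omega
  rw [hcard]
  show (3/2:ℝ)^(coincidence x w) * _ = _
  have hs : (23/18:ℝ)^s = (23/18)^(coincidence x w + (s - coincidence x w)) := by
    rw [Nat.add_sub_cancel' hle]
  rw [hs, pow_add]
  have h32 : (3/2:ℝ) = (23/18) * (27/23) := by norm_num
  rw [h32, mul_pow]
  ring

lemma prod_term' {n s : ℕ} (X : Fin n → Fin s → Fin 3) (i k : Fin n) :
    ∏ j, ((3:ℝ)/2 - |zpt3 X i j - zpt3 X k j| * (1 - |zpt3 X i j - zpt3 X k j|))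
    = (23/18 : ℝ)^s * (27/23 : ℝ)^(coincidence (X i) (X k)) := by
  rw [← pow_coincidence' (X i) (X k)]
  apply Finset.prod_congr rfl
  intro j _
  unfold zpt3
  exact term_eq' (X i j) (X k j)

lemma sum_split' {n : ℕ} (F : Fin n → Fin n → ℝ) (hsymm : ∀ i k, F i k = F k i) :
    ∑ i, ∑ k, F i k = (∑ i, F i i) + 2 * ∑ p ∈ pairs n, F p.1 p.2 := by
  classical
  have h0 : ∑ i, ∑ k, F i k = ∑ p ∈ (univ : Finset (Fin n × Fin n)), F p.1 p.2 := by
    rw [← Finset.univ_product_univ, Finset.sum_product]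
  have h1 : ∑ p ∈ (univ : Finset (Fin n × Fin n)), F p.1 p.2
      = (∑ p ∈ univ.filter (fun p : Fin n × Fin n => p.1 < p.2), F p.1 p.2)
        + ∑ p ∈ univ.filter (fun p : Fin n × Fin n => ¬ p.1 < p.2), F p.1 p.2 :=
    (Finset.sum_filter_add_sum_filter_not _ _ _).symm
  have h2 : ∑ p ∈ univ.filter (fun p : Fin n × Fin n => ¬ p.1 < p.2), F p.1 p.2
      = (∑ p ∈ (univ.filter (fun p : Fin n × Fin n => ¬ p.1 < p.2)).filter
            (fun p => p.1 = p.2), F p.1 p.2)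
        + ∑ p ∈ (univ.filter (fun p : Fin n × Fin n => ¬ p.1 < p.2)).filter
            (fun p => ¬ p.1 = p.2), F p.1 p.2 :=
    (Finset.sum_filter_add_sum_filter_not _ _ _).symm
  have e1 : (univ.filter (fun p : Fin n × Fin n => ¬ p.1 < p.2)).filter
      (fun p => p.1 = p.2) = univ.filter (fun p : Fin n × Fin n => p.1 = p.2) := by
    rw [Finset.filter_filter]
    apply Finset.filter_congr
    intro p _
    constructor
    · exact fun h => h.2
    · exact fun h => ⟨by rw [h]; exact lt_irrefl _, h⟩
  have e2 : (univ.filter (fun p : Fin n × Fin n => ¬ p.1 < p.2)).filter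
      (fun p => ¬ p.1 = p.2) = univ.filter (fun p : Fin n × Fin n => p.2 < p.1) := by
    rw [Finset.filter_filter]
    apply Finset.filter_congr
    intro p _
    constructor
    · rintro ⟨h1', h2'⟩
      rcases lt_trichotomy p.1 p.2 with h | h | h
      · exact absurd h h1'
      · exact absurd h h2'
      · exact h
    · exact fun h => ⟨fun h' => absurd (h.trans h') (lt_irrefl _), fun h' => by
        rw [h'] at h; exact absurd h (lt_irrefl _)⟩
  have e3 : ∑ p ∈ univ.filter (fun p : Fin n × Fin n => p.1 = p.2), F p.1 p.2
      = ∑ i, F i i := by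
    rw [Finset.sum_filter, ← Finset.univ_product_univ, Finset.sum_product]
    simp
  have e4 : ∑ p ∈ univ.filter (fun p : Fin n × Fin n => p.2 < p.1), F p.1 p.2
      = ∑ p ∈ pairs n, F p.1 p.2 := by
    apply Finset.sum_equiv (Equiv.prodComm (Fin n) (Fin n))
    · intro p; simp [pairs]
    · intro p _; exact hsymm p.1 p.2
  rw [h0, h1, h2, e1, e2, e3, e4]
  show _ + (_ + _) = _
  unfold pairs
  ring

lemma row_sum' {n s : ℕ} (X : Fin n → Fin s → Fin 3) (hX : IsBalanced X) (i : Fin n) :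
    ∑ k, coincidence (X i) (X k) = s * (n / 3) := by
  have h1 : ∀ k : Fin n, coincidence (X i) (X k)
      = ∑ j : Fin s, if X i j = X k j then 1 else 0 := fun k => by
    unfold coincidence; rw [Finset.card_filter]
  rw [Finset.sum_congr rfl fun k _ => h1 k, Finset.sum_comm]
  have h2 : ∀ j : Fin s, (∑ k : Fin n, if X i j = X k j then 1 else 0) = n / 3 := by
    intro j
    rw [← hX.2 j (X i j), Finset.card_filter]
    exact Finset.sum_congr rfl fun k _ => by simp [eq_comm]
  rw [Finset.sum_congr rfl fun j _ => h2 j, Finset.sum_const, Finset.card_univ,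
    Fintype.card_fin, smul_eq_mul]

lemma bern_key' (b t : ℕ) :
    (27/23:ℝ)^t * (1 + (4/23) * ((b:ℝ) - t)) ≤ (27/23:ℝ)^b := by
  rcases le_total t b with h | h
  · obtain ⟨m, rfl⟩ : ∃ m, b = t + m := ⟨b - t, by omega⟩
    have h1 : (1:ℝ) + m * (4/23) ≤ (1 + 4/23)^m := one_add_mul_le_pow (by norm_num) m
    have h2 : ((1:ℝ) + 4/23)^m = (27/23)^m := by norm_num
    have h3 : (0:ℝ) < (27/23)^t := pow_pos (by norm_num) t
    calc (27/23:ℝ)^t * (1 + (4/23) * ((↑(t+m):ℝ) - t))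
        = (27/23)^t * (1 + m * (4/23)) := by push_cast; ring
      _ ≤ (27/23)^t * (27/23)^m := by
          apply mul_le_mul_of_nonneg_left _ (le_of_lt h3)
          rw [← h2]; exact h1
      _ = (27/23)^(t+m) := (pow_add _ _ _).symm
  · obtain ⟨m, rfl⟩ : ∃ m, t = b + m := ⟨t - b, by omega⟩
    have h1 : (1:ℝ) + m * (-(4/23)) ≤ (1 + -(4/23))^m := one_add_mul_le_pow (by norm_num) m
    have h2 : ((1:ℝ) + -(4/23))^m = (19/23)^m := by norm_num
    have hb : (0:ℝ) < (27/23)^b := pow_pos (by norm_num) b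
    have hm : (0:ℝ) < (27/23)^m := pow_pos (by norm_num) m
    have key : (27/23:ℝ)^m * (1 - (4/23) * m) ≤ 1 := by
      calc (27/23:ℝ)^m * (1 - (4/23) * m)
          ≤ (27/23)^m * (19/23)^m := by
            apply mul_le_mul_of_nonneg_left _ (le_of_lt hm)
            rw [← h2]
            nlinarith
        _ = (513/529:ℝ)^m := by rw [← mul_pow]; norm_num
        _ ≤ 1 := pow_le_one₀ (by norm_num) (by norm_num)
    calc (27/23:ℝ)^(b+m) * (1 + (4/23) * ((b:ℝ) - ↑(b+m)))
        = (27/23)^b * ((27/23)^m * (1 - (4/23) * m)) := by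
          rw [pow_add]; push_cast; ring
      _ ≤ (27/23)^b * 1 := mul_le_mul_of_nonneg_left key (le_of_lt hb)
      _ = (27/23)^b := mul_one _


/-- Corollary 1 (three-level, wrap-around L₂-discrepancy):
WL₂²(X) − a₂ = (2/n²)(23/18)ˢ ∑_{i<k} (27/23)^{β(x_i,x_k)}
             ≥ ((n−1)(23+4f)/(23n)) (23/18)ˢ (27/23)^θ. -/
theorem WL2sq_identity_and_bound_three_level (n s : ℕ) (hn : 2 ≤ n)
    (X : Fin n → Fin s → Fin 3) (hX : IsBalanced X)
    (a₂ : ℝ) (ha₂ : a₂ = 1 / (n : ℝ) * (3 / 2 : ℝ) ^ s - (4 / 3 : ℝ) ^ s)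
    (βbar : ℝ) (hβbar : βbar = (s : ℝ) * ((n : ℝ) - 3) / (3 * ((n : ℝ) - 1)))
    (θ : ℕ) (hθ : θ = ⌊βbar⌋₊)
    (f : ℝ) (hf : f = βbar - θ) :
    WL2sq X - a₂ = 2 / (n : ℝ) ^ 2 * (23 / 18 : ℝ) ^ s *
        ∑ p ∈ pairs n, (27 / 23 : ℝ) ^ coincidence (X p.1) (X p.2) ∧
      2 / (n : ℝ) ^ 2 * (23 / 18 : ℝ) ^ s *
          ∑ p ∈ pairs n, (27 / 23 : ℝ) ^ coincidence (X p.1) (X p.2)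
        ≥ ((n : ℝ) - 1) * (23 + 4 * f) / (23 * n) * (23 / 18 : ℝ) ^ s
            * (27 / 23 : ℝ) ^ θ := by
  have hn3 : 3 ≤ n := by
    rcases hX.1 with ⟨m, rfl⟩
    omega
  have hn0 : (n:ℝ) ≠ 0 := by positivity
  have hn1 : (n:ℝ) - 1 ≠ 0 := by
    have : (2:ℝ) ≤ n := by exact_mod_cast hn
    linarith
  set T : ℝ := ∑ p ∈ pairs n, (27 / 23 : ℝ) ^ coincidence (X p.1) (X p.2) with hT
  -- identity
  have hsum : ∑ i, ∑ k, ∏ j,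
      ((3:ℝ)/2 - |zpt3 X i j - zpt3 X k j| * (1 - |zpt3 X i j - zpt3 X k j|))
      = (n:ℝ) * (3/2)^s + 2 * ((23/18)^s * T) := by
    have h1 : ∑ i, ∑ k, ∏ j,
        ((3:ℝ)/2 - |zpt3 X i j - zpt3 X k j| * (1 - |zpt3 X i j - zpt3 X k j|))
        = ∑ i, ∑ k, (23/18 : ℝ)^s * (27/23 : ℝ)^(coincidence (X i) (X k)) := by
      apply Finset.sum_congr rfl; intro i _
      apply Finset.sum_congr rfl; intro k _
      exact prod_term' X i k
    rw [h1, sum_split' _ (fun i k => by rw [coincidence_comm'])]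
    congr 1
    · have : ∀ i : Fin n, (23/18 : ℝ)^s * (27/23 : ℝ)^(coincidence (X i) (X i))
          = (3/2 : ℝ)^s := by
        intro i
        rw [coincidence_self', ← mul_pow]
        norm_num
      rw [Finset.sum_congr rfl fun i _ => this i, Finset.sum_const, Finset.card_univ,
        Fintype.card_fin, nsmul_eq_mul]
    · rw [hT, Finset.mul_sum, Finset.mul_sum, Finset.mul_sum]
  have hId : WL2sq X - a₂ = 2 / (n : ℝ) ^ 2 * (23 / 18 : ℝ) ^ s * T := by
    rw [WL2sq, hsum, ha₂]
    field_simp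
    ring
  refine ⟨hId, ?_⟩
  -- counting
  set Nr : ℝ := ∑ _p ∈ pairs n, (1:ℝ) with hNr
  set Pr : ℝ := ∑ p ∈ pairs n, (coincidence (X p.1) (X p.2) : ℝ) with hPr
  have hNcount : (n:ℝ) * n = n + 2 * Nr := by
    have h := sum_split' (n := n) (fun _ _ => (1:ℝ)) (fun _ _ => rfl)
    rw [hNr]
    simpa using h
  have hcast3 : ((n / 3 : ℕ) : ℝ) = (n:ℝ) / 3 := by
    rcases hX.1 with ⟨m, rfl⟩
    rw [Nat.mul_div_cancel_left m (by norm_num)]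
    push_cast
    ring
  have hPcount : (n:ℝ) * ((s:ℝ) * ((n:ℝ)/3)) = (n:ℝ) * s + 2 * Pr := by
    have h1 := sum_split' (fun i k => (coincidence (X i) (X k) : ℝ))
      (fun i k => by
        show ((coincidence (X i) (X k) : ℕ) : ℝ) = ((coincidence (X k) (X i) : ℕ) : ℝ)
        rw [coincidence_comm'])
    have h2 : ∑ i, ∑ k, (coincidence (X i) (X k) : ℝ) = (n:ℝ) * ((s:ℝ) * ((n:ℝ)/3)) := by
      have h3 : ∀ i : Fin n, ∑ k, (coincidence (X i) (X k) : ℝ) = (s:ℝ) * ((n:ℝ)/3) := by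
        intro i
        have := row_sum' X hX i
        have h4 : ∑ k, (coincidence (X i) (X k) : ℝ)
            = ((∑ k, coincidence (X i) (X k) : ℕ) : ℝ) := by push_cast; rfl
        rw [h4, this]
        push_cast
        rw [hcast3]
      rw [Finset.sum_congr rfl fun i _ => h3 i, Finset.sum_const, Finset.card_univ,
        Fintype.card_fin, nsmul_eq_mul]
    have h5 : ∀ i : Fin n, (coincidence (X i) (X i) : ℝ) = (s:ℝ) := fun i => by
      rw [coincidence_self']
    rw [h2] at h1
    rw [h1, Finset.sum_congr rfl fun i _ => h5 i, Finset.sum_const, Finset.card_univ,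
      Fintype.card_fin, nsmul_eq_mul]
  -- lower bound for T
  have hTlow : (27/23:ℝ)^θ * (Nr + (4/23) * (Pr - Nr * θ)) ≤ T := by
    have h1 : ∀ p ∈ pairs n,
        (27/23:ℝ)^θ * (1 + (4/23) * ((coincidence (X p.1) (X p.2) : ℝ) - θ))
          ≤ (27/23:ℝ)^(coincidence (X p.1) (X p.2)) :=
      fun p _ => bern_key' _ θ
    have h2 : ∀ p ∈ pairs n,
        (27/23:ℝ)^θ * (1 + (4/23) * ((coincidence (X p.1) (X p.2) : ℝ) - θ))
          = ((27/23:ℝ)^θ * (1 - (4/23) * θ))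
            + ((27/23:ℝ)^θ * (4/23)) * (coincidence (X p.1) (X p.2) : ℝ) :=
      fun p _ => by ring
    calc (27/23:ℝ)^θ * (Nr + (4/23) * (Pr - Nr * θ))
        = (((pairs n).card : ℝ)) * ((27/23:ℝ)^θ * (1 - (4/23) * θ))
            + ((27/23:ℝ)^θ * (4/23)) * Pr := by
          rw [hNr, Finset.sum_const, nsmul_eq_mul, mul_one]
          ring
      _ = ∑ p ∈ pairs n,
            (27/23:ℝ)^θ * (1 + (4/23) * ((coincidence (X p.1) (X p.2) : ℝ) - θ)) := by
          rw [Finset.sum_congr rfl h2, Finset.sum_add_distrib, Finset.sum_const,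
            nsmul_eq_mul, ← Finset.mul_sum, hPr]
      _ ≤ T := Finset.sum_le_sum h1
  -- final bound
  have hpos : (0:ℝ) ≤ 2 / (n:ℝ)^2 * (23/18)^s := by positivity
  have hNr2 : Nr = ((n:ℝ) * n - n) / 2 := by linarith
  have hPr2 : Pr = ((n:ℝ) * ((s:ℝ) * ((n:ℝ)/3)) - (n:ℝ) * s) / 2 := by linarith
  rw [ge_iff_le]
  calc ((n : ℝ) - 1) * (23 + 4 * f) / (23 * n) * (23 / 18 : ℝ) ^ s * (27 / 23 : ℝ) ^ θ
      = 2 / (n:ℝ)^2 * (23/18)^s * ((27/23:ℝ)^θ * (Nr + (4/23) * (Pr - Nr * θ))) := by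
        rw [hf, hβbar, hNr2, hPr2]
        field_simp
    _ ≤ 2 / (n:ℝ)^2 * (23/18)^s * T := mul_le_mul_of_nonneg_left hTlow hpos
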